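/- arXiv:1308.4562 — 4 statements merged into one kernel-verified Lean document; each statement's English description precedes it below -/
import Mathlib

section
/- Let λ ≠ 0, α ∈ (0,1], c₁ > 0, and let L : ℝ → ℝ satisfy the large deviation estimate and the Hölder bound |L(E) − L(E′)| ≤ c₁|E−E′|^α for all E, E′ ∈ [−2,2]. Then there is a constant c > 0 (depending only on λ, α, c₁) such that for every κ ∈ (0,1) there exist κ′ > 0 and N₀ ∈ ℤ₊ such that for all N ≥ N₀ and all E₀ with [E₀−κ, E₀+κ] ⊂ [−2,2]: ℙ_V[ sup_{|E−E₀| < κ} log‖M_N(E)‖ ≥ L(E₀)·N + c·κ^α·N ] ≤ e^{−κ′N}. -/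
open scoped BigOperators

noncomputable section

/-- Value `v_j ∈ {−1,1}` of the potential at 1-indexed site `j ∈ [1,N]` (0 outside). -/
def vOf {N : ℕ} (V : Fin N → Bool) (j : ℕ) : ℝ :=
  if h : 1 ≤ j ∧ j ≤ N then (if V ⟨j - 1, by omega⟩ then 1 else -1) else 0

/-- The Anderson–Bernoulli Hamiltonian `H_N` with coupling `lam`. -/
def Ham (lam : ℝ) {N : ℕ} (V : Fin N → Bool) : Matrix (Fin N) (Fin N) ℝ :=
  Matrix.of fun m n =>
    if m = n then lam * (if V n then 1 else -1)
    else if m.val + 1 = n.val ∨ n.val + 1 = m.val then 1 else 0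

/-- Uniform probability of an event on configurations `{−1,1}^N`. -/
def prVal (N : ℕ) (A : Set ((Fin N) → Bool)) : ℝ := (Nat.card A : ℝ) / 2 ^ N

/-- Expectation w.r.t. the uniform measure on `{−1,1}^N`. -/
def expVal (N : ℕ) (f : ((Fin N) → Bool) → ℝ) : ℝ := (∑ V : (Fin N) → Bool, f V) / 2 ^ N

open Classical in
/-- Number of eigenvalues (with multiplicity) of `H_N` that are `≤ E`. -/
def eigCountLE (lam : ℝ) {N : ℕ} (V : Fin N → Bool) (E : ℝ) : ℕ :=
  (((Ham lam V).charpoly.roots).filter (fun x => x ≤ E)).card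

open Classical in
/-- Number of eigenvalues (with multiplicity) of `H_N` lying in a set `S`. -/
def eigCountIn (lam : ℝ) {N : ℕ} (V : Fin N → Bool) (S : Set ℝ) : ℕ :=
  (((Ham lam V).charpoly.roots).filter (fun x => x ∈ S)).card

/-- `lam` satisfies the algebraic condition with parameter `C`. -/
def AlgCond (C lam : ℝ) : Prop :=
  lam ≠ 0 ∧ ∃ P : Polynomial ℤ,
    Irreducible (P.map (Int.castRingHom ℚ)) ∧
    Polynomial.aeval lam P = 0 ∧
    (P.natDegree : ℝ) ≤ C ∧
    (∀ n : ℕ, ((|P.coeff n| : ℤ) : ℝ) ≤ |lam| ^ (-C)) ∧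
    ∃ μ : ℂ, Polynomial.aeval μ P = 0 ∧ 1 ≤ ‖μ‖

/-- `Nf` is the integrated density of states for coupling `lam`. -/
def IsIDS (lam : ℝ) (Nf : ℝ → ℝ) : Prop :=
  ∀ E : ℝ, Filter.Tendsto
    (fun N : ℕ => expVal N (fun V => (eigCountLE lam V E : ℝ)) / N)
    Filter.atTop (nhds (Nf E))

/-- One transfer matrix factor. -/
def Tmat (lam E v : ℝ) : Matrix (Fin 2) (Fin 2) ℝ := !![E - lam * v, -1; 1, 0]

/-- Transfer matrix `M_{[a,b]}(E)` (factor `j = b` leftmost, `j = a` rightmost). -/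
def Mab (lam E : ℝ) {N : ℕ} (V : Fin N → Bool) (a b : ℕ) : Matrix (Fin 2) (Fin 2) ℝ :=
  (((List.range' a (b + 1 - a)).reverse).map (fun j => Tmat lam E (vOf V j))).prod

/-- Transfer matrix `M_N(E) = M_{[1,N]}(E)`. -/
def MN (lam E : ℝ) {N : ℕ} (V : Fin N → Bool) : Matrix (Fin 2) (Fin 2) ℝ := Mab lam E V 1 N

/-- Euclidean norm on `ℝ^n`. -/
def nrm {n : ℕ} (x : Fin n → ℝ) : ℝ := Real.sqrt (∑ i, x i ^ 2)

/-- Euclidean inner product on `ℝ^n`. -/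
def iprod {n : ℕ} (x y : Fin n → ℝ) : ℝ := ∑ i, x i * y i

/-- Operator norm of a 2×2 real matrix. -/
def opNorm (M : Matrix (Fin 2) (Fin 2) ℝ) : ℝ :=
  ⨆ x : {x : Fin 2 → ℝ // nrm x = 1}, nrm (M.mulVec x.val)

/-- The large deviation estimate for the Lyapunov exponent `L`. -/
def LargeDeviation (lam : ℝ) (L : ℝ → ℝ) : Prop :=
  ∀ σ > (0 : ℝ), ∃ σ' > (0 : ℝ), ∃ C₂ > (0 : ℝ), ∀ E ∈ Set.Icc (-2 : ℝ) 2, ∀ n : ℕ, 1 ≤ n →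
    prVal n {V | σ < |Real.log (opNorm (MN lam E V)) / n - L E|} ≤ C₂ * Real.exp (-σ' * n)

/-- The unit circle in `ℝ²`. -/
def sphere1 : Set (Fin 2 → ℝ) := {x | nrm x = 1}

/-- Projective action of an invertible matrix on the circle. -/
def projAct (g : Matrix (Fin 2) (Fin 2) ℝ) (x : Fin 2 → ℝ) : Fin 2 → ℝ :=
  (nrm (g.mulVec x))⁻¹ • g.mulVec x

def gplus (lam E : ℝ) : Matrix (Fin 2) (Fin 2) ℝ := !![E + lam, -1; 1, 0]

def gminus (lam E : ℝ) : Matrix (Fin 2) (Fin 2) ℝ := !![E - lam, -1; 1, 0]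

/-- A measure on the circle is symmetric: `ν(−A) = ν(A)`. -/
def SymMeasure (ν : MeasureTheory.Measure (Fin 2 → ℝ)) : Prop :=
  ∀ A : Set (Fin 2 → ℝ), MeasurableSet A → ν ((fun x => -x) ⁻¹' A) = ν A

/-- `ν` is `E`-stationary. -/
def Stationary (lam E : ℝ) (ν : MeasureTheory.Measure (Fin 2 → ℝ)) : Prop :=
  ∀ A : Set (Fin 2 → ℝ), MeasurableSet A →
    ν A = 2⁻¹ * ν (projAct (gplus lam E) ⁻¹' A) + 2⁻¹ * ν (projAct (gminus lam E) ⁻¹' A)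

/-- Point on the circle at angle `θ`. -/
def circlePt (θ : ℝ) : Fin 2 → ℝ := ![Real.cos θ, Real.sin θ]

/-- `(E, ν)` equidistributes at exponential rate `c`. -/
def Equidistributes (lam E : ℝ) (ν : MeasureTheory.Measure (Fin 2 → ℝ)) (c : ℝ) : Prop :=
  ∀ N : ℕ, 1 ≤ N → ∀ x ∈ sphere1, ∀ f : (Fin 2 → ℝ) → ℝ, ∀ F : ℝ → ℝ, ∀ A B : ℝ,
    (∀ θ : ℝ, f (circlePt θ) = F θ) →
    ContDiff ℝ 1 F →
    (∀ θ : ℝ, F (θ + Real.pi) = F θ) →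
    (∀ θ : ℝ, |F θ| ≤ A) → (∀ θ : ℝ, |deriv F θ| ≤ B) →
    |expVal N (fun V => f (projAct (MN lam E V) x)) - ∫ y, f y ∂ν|
      ≤ Real.exp (-c * N) * (A + B)


/-- The rank-one matrix `P = [[1,0],[0,0]]`. -/
def Pmat : Matrix (Fin 2) (Fin 2) ℝ := !![1, 0; 0, 0]

/-- Dirichlet restriction `H_{[a,b]}` (1-indexed block `a ≤ n ≤ b`). -/
def HamRes (lam : ℝ) {N : ℕ} (V : Fin N → Bool) (a b : ℕ) :
    Matrix (Fin (b + 1 - a)) (Fin (b + 1 - a)) ℝ :=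
  Matrix.of fun m n =>
    if m = n then lam * vOf V (a + m.val)
    else if m.val + 1 = n.val ∨ n.val + 1 = m.val then 1 else 0

/-- Restriction of a vector to the 1-indexed coordinate window `[a,b]`. -/
def restr {N : ℕ} (η : Fin N → ℝ) (a b : ℕ) : Fin (b + 1 - a) → ℝ :=
  fun i => if h : a + i.val - 1 < N then η ⟨a + i.val - 1, h⟩ else 0

/-- The iterated product `M_{[ℓ₁+1,top]} P M_{[ℓ₂+1,ℓ₁−1]} P ⋯ P M_{[1,ℓ_k−1]}`
indexed by the decreasing list `[ℓ₁, ℓ₂, …, ℓ_k]`. -/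
def chainProd (lam E : ℝ) {N : ℕ} (V : Fin N → Bool) : ℕ → List ℕ → Matrix (Fin 2) (Fin 2) ℝ
  | top, [] => Mab lam E V 1 top
  | top, ℓ :: rest => Mab lam E V (ℓ + 1) top * Pmat * chainProd lam E V (ℓ - 1) rest

/-! ### Auxiliary lemmas for `uniform_upper_bound_transfer` -/

open Polynomial in
private lemma ubt_sum_cos_mul_sin (M : ℕ) (t : ℝ) :
    (∑ j ∈ Finset.range M, Real.cos ((2 * j + 1) * t)) * (2 * Real.sin t)
      = Real.sin (2 * M * t) := by
  induction M with
  | zero => simp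
  | succ m ih =>
    rw [Finset.sum_range_succ, add_mul, ih]
    have h1 : Real.sin (2*((m:ℝ)+1)*t) - Real.sin (2*(m:ℝ)*t)
        = 2 * Real.cos ((2*(m:ℝ)+1)*t) * Real.sin t := by
      rw [show 2*((m:ℝ)+1)*t = (2*(m:ℝ)+1)*t + t by ring,
          show 2*(m:ℝ)*t = (2*(m:ℝ)+1)*t - t by ring, Real.sin_add, Real.sin_sub]
      ring
    push_cast
    linarith

private lemma ubt_sum_cos_eq_zero (M m : ℕ) (hM : 1 ≤ M) (hm1 : 1 ≤ m) (hm2 : m < 2 * M) :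
    ∑ j ∈ Finset.range M, Real.cos ((m : ℝ) * ((2 * j + 1) * Real.pi / (2 * M))) = 0 := by
  set t : ℝ := m * Real.pi / (2 * M) with ht
  have hM' : (0:ℝ) < M := by positivity
  have htpos : 0 < t := by
    apply div_pos (by positivity) (by positivity)
  have htlt : t < Real.pi := by
    rw [ht, div_lt_iff₀ (by positivity)]
    have : (m:ℝ) < 2*M := by exact_mod_cast hm2
    nlinarith [Real.pi_pos]
  have hsin : 0 < Real.sin t := Real.sin_pos_of_pos_of_lt_pi htpos htlt
  have key := ubt_sum_cos_mul_sin M t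
  have harg : ∀ j : ℕ, (2 * (j:ℝ) + 1) * t = (m : ℝ) * ((2 * j + 1) * Real.pi / (2 * M)) := by
    intro j; rw [ht]; ring
  have key2 : (∑ j ∈ Finset.range M, Real.cos ((m : ℝ) * ((2 * j + 1) * Real.pi / (2 * M)))) * (2 * Real.sin t) = Real.sin (2 * M * t) := by
    rw [← key]; congr 1; apply Finset.sum_congr rfl; intro j _; rw [harg]
  have hzero : Real.sin (2 * M * t) = 0 := by
    have : 2 * (M:ℝ) * t = m * Real.pi := by
      rw [ht]; field_simp
    rw [this, Real.sin_nat_mul_pi]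
  rw [hzero] at key2
  have h2s : 2 * Real.sin t ≠ 0 := by positivity
  exact (mul_eq_zero.mp key2).resolve_right h2s

open Polynomial in
private lemma ubt_T_deg_coeff : ∀ n : ℕ, (Polynomial.Chebyshev.T ℝ n).natDegree ≤ n ∧
    (Polynomial.Chebyshev.T ℝ n).coeff n = if n = 0 then 1 else 2^(n-1) := by
  intro n
  induction n using Nat.twoStepInduction with
  | zero => simp [Polynomial.Chebyshev.T_zero]
  | one => simp [Polynomial.Chebyshev.T_one]
  | more n ih1 ih2 =>
    have hT : Polynomial.Chebyshev.T ℝ ((n+2 : ℕ) : ℤ)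
        = 2 * X * Polynomial.Chebyshev.T ℝ ((n+1 : ℕ) : ℤ) - Polynomial.Chebyshev.T ℝ ((n:ℕ) : ℤ) := by
      push_cast
      exact Polynomial.Chebyshev.T_add_two ℝ n
    have h2X : (2 * X : ℝ[X]).natDegree ≤ 1 := natDegree_mul_le.trans (by simp)
    have hC2 : (C (2:ℝ)) = (2 : ℝ[X]) := by
      exact map_ofNat C 2
    constructor
    · rw [hT]
      refine (natDegree_sub_le _ _).trans (max_le ?_ (ih1.1.trans (by omega)))
      exact natDegree_mul_le.trans (by have := ih2.1; omega)
    · rw [hT, coeff_sub, coeff_eq_zero_of_natDegree_lt (lt_of_le_of_lt ih1.1 (by omega))]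
      have hrw : (2 * X * Polynomial.Chebyshev.T ℝ ((n+1 : ℕ) : ℤ) : ℝ[X])
          = C 2 * (X * Polynomial.Chebyshev.T ℝ ((n+1 : ℕ) : ℤ)) := by
        rw [hC2]; ring
      rw [hrw, coeff_C_mul, coeff_X_mul]
      have := ih2.2
      simp only [Nat.add_eq_zero, and_false, if_false] at this ⊢
      rw [this]
      norm_num [pow_succ]
      ring

open Polynomial in
private lemma ubt_exists_cheb_expansion : ∀ (n : ℕ) (q : ℝ[X]), q.natDegree ≤ n →
    ∃ c : ℕ → ℝ, q = ∑ k ∈ Finset.range (n+1), C (c k) * Polynomial.Chebyshev.T ℝ k := by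
  intro n
  induction n with
  | zero =>
    intro q hq
    refine ⟨fun _ => q.coeff 0, ?_⟩
    conv_lhs => rw [eq_C_of_natDegree_le_zero hq]
    simp [Finset.sum_range_one, Polynomial.Chebyshev.T_zero]
  | succ n ih =>
    intro q hq
    set d : ℝ := q.coeff (n+1) / 2^n with hd
    set q' : ℝ[X] := q - C d * Polynomial.Chebyshev.T ℝ (n+1 : ℕ) with hq'
    have hdeg : q'.natDegree ≤ n := by
      rw [natDegree_le_iff_coeff_eq_zero]
      intro m hm
      rw [hq', coeff_sub, coeff_C_mul]
      rcases eq_or_lt_of_le (Nat.succ_le_of_lt hm) with h | h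
      · rw [← h, (ubt_T_deg_coeff (n+1)).2]
        simp only [if_neg (Nat.succ_ne_zero n), Nat.add_sub_cancel]
        rw [hd, div_mul_cancel₀ _ (by positivity : (2:ℝ)^n ≠ 0), sub_self]
      · rw [coeff_eq_zero_of_natDegree_lt (lt_of_le_of_lt hq h),
            coeff_eq_zero_of_natDegree_lt (lt_of_le_of_lt (ubt_T_deg_coeff (n+1)).1 h)]
        simp
    obtain ⟨c', hc'⟩ := ih q' hdeg
    refine ⟨fun k => if k = n+1 then d else c' k, ?_⟩
    rw [Finset.sum_range_succ]
    have : ∑ k ∈ Finset.range (n+1), C (if k = n+1 then d else c' k) * Polynomial.Chebyshev.T ℝ k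
        = ∑ k ∈ Finset.range (n+1), C (c' k) * Polynomial.Chebyshev.T ℝ k := by
      apply Finset.sum_congr rfl
      intro k hk
      rw [Finset.mem_range] at hk
      rw [if_neg (by omega)]
    rw [this, ← hc']
    simp only [↓reduceIte]
    rw [hq']
    ring

private lemma ubt_cheb_orth_aux (n k l : ℕ) (hk : k ≤ n) (hl : l ≤ k) :
    ∑ j ∈ Finset.range (n+1),
      Real.cos ((k:ℝ) * ((2 * j + 1) * Real.pi / (2 * (n+1)))) *
      Real.cos ((l:ℝ) * ((2 * j + 1) * Real.pi / (2 * (n+1))))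
    = if k = l then (if k = 0 then (n+1:ℝ) else (n+1)/2) else 0 := by
  have hpt : ∀ j ∈ Finset.range (n+1),
      Real.cos ((k:ℝ) * ((2 * j + 1) * Real.pi / (2 * (n+1)))) *
      Real.cos ((l:ℝ) * ((2 * j + 1) * Real.pi / (2 * (n+1))))
      = (Real.cos (((k+l : ℕ):ℝ) * ((2 * j + 1) * Real.pi / (2 * (n+1))))
        + Real.cos (((k-l : ℕ):ℝ) * ((2 * j + 1) * Real.pi / (2 * (n+1))))) / 2 := by
    intro j _
    set θ : ℝ := (2 * j + 1) * Real.pi / (2 * (n+1)) with hθ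
    have h1 : Real.cos ((k:ℝ)*θ + (l:ℝ)*θ) + Real.cos ((k:ℝ)*θ - (l:ℝ)*θ)
        = 2 * (Real.cos ((k:ℝ)*θ) * Real.cos ((l:ℝ)*θ)) := by
      rw [Real.cos_add, Real.cos_sub]; ring
    have e1 : ((k+l : ℕ):ℝ) * θ = (k:ℝ)*θ + (l:ℝ)*θ := by push_cast; ring
    have e2 : ((k-l : ℕ):ℝ) * θ = (k:ℝ)*θ - (l:ℝ)*θ := by
      rw [Nat.cast_sub hl]; ring
    rw [e1, e2, h1]; ring
  rw [Finset.sum_congr rfl hpt, ← Finset.sum_div, Finset.sum_add_distrib]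
  have hS : ∀ m : ℕ, m ≤ 2*n → ∑ j ∈ Finset.range (n+1),
      Real.cos ((m:ℝ) * ((2 * j + 1) * Real.pi / (2 * (n+1)))) = if m = 0 then (n+1:ℝ) else 0 := by
    intro m hm
    rcases Nat.eq_zero_or_pos m with h | h
    · subst h; simp
    · rw [if_neg (by omega)]
      have : ((n:ℕ)+1 : ℝ) = ((n+1 : ℕ) : ℝ) := by push_cast; ring
      rw [this]
      exact ubt_sum_cos_eq_zero (n+1) m (by omega) h (by omega)
  rw [hS (k+l) (by omega), hS (k-l) (by omega)]
  rcases eq_or_lt_of_le hl with h | h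
  · subst h
    rw [if_pos rfl, Nat.sub_self]
    by_cases h0 : l = 0
    · subst h0; norm_num
    · rw [if_neg h0, if_neg (by omega : ¬ l + l = 0)]
      norm_num
  · rw [if_neg (by omega : ¬ k = l), if_neg (by omega : ¬ k + l = 0),
      if_neg (by omega : ¬ k - l = 0)]
    norm_num

open Polynomial in
private lemma ubt_cheb_node_bound (n : ℕ) (q : ℝ[X]) (hq : q.natDegree ≤ n) (B : ℝ)
    (hB : ∀ j ∈ Finset.range (n+1),
      |q.eval (Real.cos ((2 * j + 1) * Real.pi / (2 * (n+1))))| ≤ B) :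
    ∀ t : ℝ, |q.eval (Real.cos t)| ≤ 2 * (n+1) * B := by
  obtain ⟨c, hc⟩ := ubt_exists_cheb_expansion n q hq
  have heval : ∀ s : ℝ, q.eval (Real.cos s)
      = ∑ k ∈ Finset.range (n+1), c k * Real.cos ((k:ℝ) * s) := by
    intro s
    rw [hc, eval_finset_sum]
    apply Finset.sum_congr rfl
    intro k _
    rw [eval_mul, eval_C, Polynomial.Chebyshev.T_real_cos]
    push_cast
    ring
  have hB0 : 0 ≤ B := le_trans (abs_nonneg _) (hB 0 (by simp))
  have hcm : ∀ m ∈ Finset.range (n+1), |c m| ≤ 2 * B := by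
    intro m hm
    rw [Finset.mem_range] at hm
    set θ : ℕ → ℝ := fun j => (2 * j + 1) * Real.pi / (2 * (n+1)) with hθ
    have hswap : ∑ j ∈ Finset.range (n+1), q.eval (Real.cos (θ j)) * Real.cos ((m:ℝ) * θ j)
        = c m * (if m = 0 then (n+1:ℝ) else (n+1)/2) := by
      have : ∀ j ∈ Finset.range (n+1), q.eval (Real.cos (θ j)) * Real.cos ((m:ℝ) * θ j)
          = ∑ k ∈ Finset.range (n+1), c k *
            (Real.cos ((k:ℝ) * θ j) * Real.cos ((m:ℝ) * θ j)) := by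
        intro j _
        rw [heval (θ j), Finset.sum_mul]
        apply Finset.sum_congr rfl
        intro k _; ring
      rw [Finset.sum_congr rfl this, Finset.sum_comm]
      have hinner : ∀ k ∈ Finset.range (n+1),
          ∑ j ∈ Finset.range (n+1), c k * (Real.cos ((k:ℝ) * θ j) * Real.cos ((m:ℝ) * θ j))
          = c k * (if k = m then (if k = 0 then (n+1:ℝ) else (n+1)/2) else 0) := by
        intro k hk
        rw [Finset.mem_range] at hk
        rw [← Finset.mul_sum]
        congr 1
        rcases le_total m k with h | h
        · exact ubt_cheb_orth_aux n k m (by omega) h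
        · have h2 := ubt_cheb_orth_aux n m k (by omega) h
          have hcomm : ∑ j ∈ Finset.range (n+1),
              Real.cos ((k:ℝ) * θ j) * Real.cos ((m:ℝ) * θ j)
              = ∑ j ∈ Finset.range (n+1),
              Real.cos ((m:ℝ) * θ j) * Real.cos ((k:ℝ) * θ j) :=
            Finset.sum_congr rfl fun j _ => mul_comm _ _
          rw [hcomm, h2]
          by_cases hkm : k = m
          · subst hkm; simp
          · rw [if_neg (fun h' => hkm h'.symm), if_neg hkm]
      rw [Finset.sum_congr rfl hinner]
      have : ∀ k ∈ Finset.range (n+1),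
          c k * (if k = m then (if k = 0 then (n+1:ℝ) else (n+1)/2) else 0)
          = if k = m then c m * (if m = 0 then (n+1:ℝ) else (n+1)/2) else 0 := by
        intro k _
        by_cases hkm : k = m
        · subst hkm; simp
        · simp [hkm]
      rw [Finset.sum_congr rfl this, Finset.sum_ite_eq' (Finset.range (n+1)) m,
        if_pos (Finset.mem_range.mpr hm)]
    have hsum_le : |∑ j ∈ Finset.range (n+1),
        q.eval (Real.cos (θ j)) * Real.cos ((m:ℝ) * θ j)| ≤ (n+1) * B := by
      refine (Finset.abs_sum_le_sum_abs _ _).trans ?_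
      have hterm : ∀ j ∈ Finset.range (n+1),
          |q.eval (Real.cos (θ j)) * Real.cos ((m:ℝ) * θ j)| ≤ B := by
        intro j hj
        rw [abs_mul]
        exact le_trans (mul_le_of_le_one_right (abs_nonneg _) (Real.abs_cos_le_one _)) (hB j hj)
      refine (Finset.sum_le_sum hterm).trans ?_
      rw [Finset.sum_const, Finset.card_range, nsmul_eq_mul]
      exact le_of_eq (by push_cast; ring)
    rw [hswap, abs_mul] at hsum_le
    by_cases hm0 : m = 0
    · rw [if_pos hm0, abs_of_pos (by positivity : (0:ℝ) < (n:ℝ)+1)] at hsum_le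
      nlinarith [abs_nonneg (c m)]
    · rw [if_neg hm0, abs_of_pos (by positivity : (0:ℝ) < ((n:ℝ)+1)/2)] at hsum_le
      nlinarith [abs_nonneg (c m)]
  intro t
  rw [heval t]
  refine (Finset.abs_sum_le_sum_abs _ _).trans ?_
  have hterm : ∀ k ∈ Finset.range (n+1), |c k * Real.cos ((k:ℝ) * t)| ≤ 2 * B := by
    intro k hk
    rw [abs_mul]
    exact le_trans (mul_le_of_le_one_right (abs_nonneg _) (Real.abs_cos_le_one _)) (hcm k hk)
  refine (Finset.sum_le_sum hterm).trans ?_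
  rw [Finset.sum_const, Finset.card_range, nsmul_eq_mul]
  exact le_of_eq (by push_cast; ring)

private lemma ubt_nrm_le_abs_add (y : Fin 2 → ℝ) : nrm y ≤ |y 0| + |y 1| := by
  rw [nrm, Fin.sum_univ_two]
  have h : y 0 ^ 2 + y 1 ^ 2 ≤ (|y 0| + |y 1|) ^ 2 := by
    nlinarith [abs_nonneg (y 0), abs_nonneg (y 1), sq_abs (y 0), sq_abs (y 1)]
  calc Real.sqrt (y 0 ^ 2 + y 1 ^ 2) ≤ Real.sqrt ((|y 0| + |y 1|) ^ 2) := Real.sqrt_le_sqrt h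
  _ = |y 0| + |y 1| := by
      rw [Real.sqrt_sq (by positivity)]

private lemma ubt_abs_le_nrm (y : Fin 2 → ℝ) (a : Fin 2) : |y a| ≤ nrm y := by
  rw [nrm, ← Real.sqrt_sq_eq_abs]
  apply Real.sqrt_le_sqrt
  exact Finset.single_le_sum (f := fun i => y i ^ 2) (fun i _ => sq_nonneg _)
    (Finset.mem_univ a)

private lemma ubt_nrm_single (b : Fin 2) : nrm (Pi.single b (1:ℝ)) = 1 := by
  rw [nrm, Fin.sum_univ_two]
  fin_cases b <;> simp [Pi.single_apply]

private lemma ubt_unit_abs_le_one {x : Fin 2 → ℝ} (hx : nrm x = 1) (i : Fin 2) : |x i| ≤ 1 := by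
  have h := ubt_abs_le_nrm x i
  rw [hx] at h; exact h

private lemma ubt_mulVec_nrm_le (M : Matrix (Fin 2) (Fin 2) ℝ) {x : Fin 2 → ℝ} (hx : nrm x = 1) :
    nrm (M.mulVec x) ≤ |M 0 0| + |M 0 1| + |M 1 0| + |M 1 1| := by
  refine (ubt_nrm_le_abs_add _).trans ?_
  have h0 : M.mulVec x 0 = M 0 0 * x 0 + M 0 1 * x 1 := by
    simp [Matrix.mulVec, dotProduct, Fin.sum_univ_two]
  have h1 : M.mulVec x 1 = M 1 0 * x 0 + M 1 1 * x 1 := by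
    simp [Matrix.mulVec, dotProduct, Fin.sum_univ_two]
  rw [h0, h1]
  have := ubt_unit_abs_le_one hx 0
  have := ubt_unit_abs_le_one hx 1
  have a00 := abs_nonneg (M 0 0); have a01 := abs_nonneg (M 0 1)
  have a10 := abs_nonneg (M 1 0); have a11 := abs_nonneg (M 1 1)
  calc |M 0 0 * x 0 + M 0 1 * x 1| + |M 1 0 * x 0 + M 1 1 * x 1|
      ≤ (|M 0 0 * x 0| + |M 0 1 * x 1|) + (|M 1 0 * x 0| + |M 1 1 * x 1|) :=
        add_le_add (abs_add_le _ _) (abs_add_le _ _)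
    _ = |M 0 0| * |x 0| + |M 0 1| * |x 1| + (|M 1 0| * |x 0| + |M 1 1| * |x 1|) := by
        simp [abs_mul]
    _ ≤ |M 0 0| + |M 0 1| + |M 1 0| + |M 1 1| := by nlinarith

private instance : Nonempty {x : Fin 2 → ℝ // nrm x = 1} := ⟨⟨Pi.single 0 1, ubt_nrm_single 0⟩⟩

private lemma ubt_opNorm_le_sum_abs (M : Matrix (Fin 2) (Fin 2) ℝ) :
    opNorm M ≤ |M 0 0| + |M 0 1| + |M 1 0| + |M 1 1| :=
  ciSup_le fun x => ubt_mulVec_nrm_le M x.2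

private lemma ubt_bddAbove_opNorm (M : Matrix (Fin 2) (Fin 2) ℝ) :
    BddAbove (Set.range fun x : {x : Fin 2 → ℝ // nrm x = 1} => nrm (M.mulVec x.val)) := by
  refine ⟨|M 0 0| + |M 0 1| + |M 1 0| + |M 1 1|, ?_⟩
  rintro y ⟨x, rfl⟩
  exact ubt_mulVec_nrm_le M x.2

private lemma ubt_abs_entry_le_opNorm (M : Matrix (Fin 2) (Fin 2) ℝ) (a b : Fin 2) :
    |M a b| ≤ opNorm M := by
  have h1 : nrm (M.mulVec (Pi.single b 1)) ≤ opNorm M :=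
    le_ciSup (ubt_bddAbove_opNorm M) (⟨Pi.single b 1, ubt_nrm_single b⟩ :
      {x : Fin 2 → ℝ // nrm x = 1})
  refine le_trans ?_ h1
  have h2 : M.mulVec (Pi.single b 1) a = M a b := by
    rw [Matrix.mulVec_single]
    simp
  rw [← h2]
  exact ubt_abs_le_nrm _ a

private lemma ubt_opNorm_nonneg (M : Matrix (Fin 2) (Fin 2) ℝ) : 0 ≤ opNorm M :=
  le_trans (abs_nonneg _) (ubt_abs_entry_le_opNorm M 0 0)

private lemma ubt_det_MN (lam E : ℝ) {N : ℕ} (V : Fin N → Bool) : (MN lam E V).det = 1 := by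
  rw [MN, Mab]
  generalize (List.range' 1 (N + 1 - 1)).reverse = l
  induction l with
  | nil => simp
  | cons a l ih =>
    rw [List.map_cons, List.prod_cons, Matrix.det_mul, ih]
    rw [Tmat, Matrix.det_fin_two_of]
    ring

private lemma ubt_half_le_opNorm_MN (lam E : ℝ) {N : ℕ} (V : Fin N → Bool) :
    (1:ℝ)/2 ≤ opNorm (MN lam E V) := by
  by_contra h
  push_neg at h
  set M := MN lam E V
  have h00 := ubt_abs_entry_le_opNorm M 0 0
  have h01 := ubt_abs_entry_le_opNorm M 0 1
  have h10 := ubt_abs_entry_le_opNorm M 1 0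
  have h11 := ubt_abs_entry_le_opNorm M 1 1
  have hdet : M.det = 1 := ubt_det_MN lam E V
  rw [Matrix.det_fin_two] at hdet
  have hON := ubt_opNorm_nonneg M
  have k1 : (1:ℝ) ≤ |M 0 0| * |M 1 1| + |M 0 1| * |M 1 0| := by
    have h1 : (1:ℝ) = |M 0 0 * M 1 1 - M 0 1 * M 1 0| := by rw [hdet, abs_one]
    rw [h1, ← abs_mul, ← abs_mul]
    exact abs_sub _ _
  have p1 : |M 0 0| * |M 1 1| ≤ opNorm M * opNorm M :=
    mul_le_mul h00 h11 (abs_nonneg _) hON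
  have p2 : |M 0 1| * |M 1 0| ≤ opNorm M * opNorm M :=
    mul_le_mul h01 h10 (abs_nonneg _) hON
  nlinarith

open Polynomial in
/-- Polynomial version of the transfer matrix factor. -/
private def TmatP (lam v : ℝ) : Matrix (Fin 2) (Fin 2) ℝ[X] :=
  Matrix.of fun i j =>
    if i = 0 then (if j = 0 then X - C (lam * v) else -1)
    else (if j = 0 then 1 else 0)

open Polynomial in
/-- Polynomial version of `MN`. -/
private def QN (lam : ℝ) {N : ℕ} (V : Fin N → Bool) : Matrix (Fin 2) (Fin 2) ℝ[X] :=
  (((List.range' 1 N).reverse).map (fun j => TmatP lam (vOf V j))).prod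

open Polynomial in
private lemma ubt_TmatP_eval (lam v E : ℝ) :
    (TmatP lam v).map (Polynomial.eval E) = Tmat lam E v := by
  ext i j
  fin_cases i <;> fin_cases j <;>
    simp [TmatP, Tmat, Matrix.map_apply]

open Polynomial in
private lemma ubt_MN_eq_eval (lam E : ℝ) {N : ℕ} (V : Fin N → Bool) :
    MN lam E V = (QN lam V).map (Polynomial.eval E) := by
  rw [MN, Mab, QN]
  have : N + 1 - 1 = N := by omega
  rw [this]
  generalize (List.range' 1 N).reverse = l
  induction l with
  | nil => simp
  | cons a l ih =>
    rw [List.map_cons, List.prod_cons, List.map_cons, List.prod_cons]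
    have hmul := Matrix.map_mul (L := TmatP lam (vOf V a))
      (M := (List.map (fun j => TmatP lam (vOf V j)) l).prod) (f := Polynomial.evalRingHom E)
    rw [Polynomial.coe_evalRingHom] at hmul
    rw [hmul, ubt_TmatP_eval, ih]

open Polynomial in
private lemma ubt_entry_natDegree_le {lam : ℝ} {N : ℕ} {V : Fin N → Bool} (a b : Fin 2) :
    ((QN lam V) a b).natDegree ≤ N := by
  rw [QN]
  have hlen : ((List.range' 1 N).reverse).length = N := by
    rw [List.length_reverse, List.length_range']
  have key : ∀ l : List ℕ, ∀ a b : Fin 2,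
      (((l.map (fun j => TmatP lam (vOf V j))).prod) a b).natDegree ≤ l.length := by
    intro l
    induction l with
    | nil =>
      intro a b
      rw [List.map_nil, List.prod_nil]
      by_cases h : a = b <;> simp [Matrix.one_apply, h]
    | cons x l ih =>
      intro a b
      rw [List.map_cons, List.prod_cons, Matrix.mul_apply]
      refine natDegree_sum_le_of_forall_le _ _ ?_
      intro c _
      refine natDegree_mul_le.trans ?_
      have h1 : ((TmatP lam (vOf V x)) a c).natDegree ≤ 1 := by
        rw [TmatP, Matrix.of_apply]
        by_cases ha : a = 0 <;> by_cases hc : c = 0 <;>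
          simp only [ha, hc, if_true, if_false, ite_true, ite_false] <;>
          first
            | exact le_of_eq (natDegree_X_sub_C (lam * vOf V x))
            | simp
      have h2 := ih c b
      rw [List.length_cons]
      omega
  have := key (List.range' 1 N).reverse a b
  rwa [hlen] at this

open Polynomial in
/-- Key deterministic bound: the norm at any `E` in the window is controlled by the norms at
the Chebyshev nodes. -/
private lemma ubt_sup_entry_bound (lam E₀ κ : ℝ) (hκ : 0 < κ) (N : ℕ) (V : Fin N → Bool)
    (Xb : ℝ)
    (hXb : ∀ j ∈ Finset.range (N+1),
      opNorm (MN lam (E₀ + κ * Real.cos ((2 * j + 1) * Real.pi / (2 * (N+1)))) V) ≤ Xb)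
    (E : ℝ) (hE : |E - E₀| < κ) :
    opNorm (MN lam E V) ≤ 8 * (N+1) * Xb := by
  set u : ℝ := (E - E₀) / κ with hu
  have habs := abs_le.mp hE.le
  have hu1 : -1 ≤ u ∧ u ≤ 1 := by
    constructor
    · rw [hu, le_div_iff₀ hκ]
      linarith [habs.1]
    · rw [hu, div_le_one hκ]
      linarith [habs.2]
  have hXb0 : 0 ≤ Xb :=
    le_trans (ubt_opNorm_nonneg _) (hXb 0 (by simp))
  have hEu : E₀ + κ * u = E := by
    rw [hu]
    field_simp
    ring
  have hent : ∀ a b : Fin 2, |MN lam E V a b| ≤ 2 * (N+1) * Xb := by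
    intro a b
    set p : ℝ[X] := QN lam V a b with hp
    set q : ℝ[X] := p.comp (C E₀ + C κ * X) with hqdef
    have hqdeg : q.natDegree ≤ N := by
      refine natDegree_comp_le.trans ?_
      have h1 : (C E₀ + C κ * X : ℝ[X]).natDegree ≤ 1 := by
        refine (natDegree_add_le _ _).trans (max_le (by simp) ?_)
        exact natDegree_mul_le.trans (by simp)
      have h2 : p.natDegree ≤ N := ubt_entry_natDegree_le a b
      calc p.natDegree * (C E₀ + C κ * X : ℝ[X]).natDegree ≤ N * 1 :=
        Nat.mul_le_mul h2 h1
      _ = N := by omega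
    have hqs : ∀ s : ℝ, q.eval s = MN lam (E₀ + κ * s) V a b := by
      intro s
      rw [ubt_MN_eq_eval lam (E₀ + κ * s) V, Matrix.map_apply, hqdef, eval_comp]
      simp
      rfl
    have hnode : ∀ j ∈ Finset.range (N+1),
        |q.eval (Real.cos ((2 * j + 1) * Real.pi / (2 * (N+1))))| ≤ Xb := by
      intro j hj
      rw [hqs]
      exact (ubt_abs_entry_le_opNorm _ a b).trans (hXb j hj)
    have := ubt_cheb_node_bound N q hqdeg Xb hnode (Real.arccos u)
    rw [Real.cos_arccos hu1.1 hu1.2, hqs u, hEu] at this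
    exact this
  have h00 := hent 0 0; have h01 := hent 0 1; have h10 := hent 1 0; have h11 := hent 1 1
  refine (ubt_opNorm_le_sum_abs _).trans ?_
  linarith

private lemma ubt_prVal_mono {N : ℕ} {A B : Set ((Fin N) → Bool)} (h : A ⊆ B) :
    prVal N A ≤ prVal N B := by
  rw [prVal, prVal]
  have hc : (Nat.card A : ℝ) ≤ (Nat.card B : ℝ) := by
    exact_mod_cast Nat.card_mono (Set.toFinite B) h
  apply div_le_div_of_nonneg_right hc
  positivity

private lemma ubt_prVal_union_le {N : ℕ} (A B : Set ((Fin N) → Bool)) :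
    prVal N (A ∪ B) ≤ prVal N A + prVal N B := by
  rw [prVal, prVal, prVal, ← add_div]
  have hc : (Nat.card ↥(A ∪ B) : ℝ) ≤ (Nat.card A : ℝ) + (Nat.card B : ℝ) := by
    rw [Nat.card_coe_set_eq, Nat.card_coe_set_eq, Nat.card_coe_set_eq]
    exact_mod_cast Set.ncard_union_le A B
  apply div_le_div_of_nonneg_right hc
  positivity

private lemma ubt_prVal_nonneg {N : ℕ} (A : Set ((Fin N) → Bool)) : 0 ≤ prVal N A := by
  rw [prVal]; positivity

private lemma ubt_prVal_biUnion_le {N : ℕ} (m : ℕ) (A : ℕ → Set ((Fin N) → Bool)) :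
    prVal N (⋃ j ∈ Finset.range m, A j) ≤ ∑ j ∈ Finset.range m, prVal N (A j) := by
  induction m with
  | zero =>
    simp [prVal]
  | succ m ih =>
    rw [Finset.sum_range_succ]
    have hset : (⋃ j ∈ Finset.range (m+1), A j)
        = (⋃ j ∈ Finset.range m, A j) ∪ A m := by
      rw [Finset.range_add_one]
      simp [Set.biUnion_insert, Set.union_comm]
    rw [hset]
    exact (ubt_prVal_union_le _ _).trans (by linarith)

private lemma ubt_exists_N0 (ε Cc : ℝ) (hε : 0 < ε) :
    ∃ N₀ : ℕ, ∀ N : ℕ, N₀ ≤ N → Cc + Real.log ((N:ℝ)+1) ≤ ε * N := by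
  set D : ℝ := |Cc| + ε + 1 with hD
  have hD0 : 0 < D := by positivity
  set K : ℝ := (D + ε + 2)/ε + 1 with hK
  have hK1 : 1 ≤ K := by
    rw [hK]
    have : 0 < (D + ε + 2)/ε := by positivity
    linarith
  have hεK : ε * K = D + 2*ε + 2 := by
    rw [hK]
    field_simp
    ring
  obtain ⟨N₀, hN₀⟩ := exists_nat_ge (K^2)
  refine ⟨N₀, fun N hN => ?_⟩
  set s : ℝ := Real.sqrt ((N:ℝ)+1) with hs
  have hs2 : s^2 = (N:ℝ)+1 := Real.sq_sqrt (by positivity)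
  have hsK : K ≤ s := by
    have hNN : (N₀:ℝ) ≤ (N:ℝ) := by exact_mod_cast hN
    have h1 : K^2 ≤ (N:ℝ)+1 := by linarith
    calc K = Real.sqrt (K^2) := (Real.sqrt_sq (by linarith)).symm
    _ ≤ s := Real.sqrt_le_sqrt h1
  have hs1 : (1:ℝ) ≤ s := le_trans hK1 hsK
  have hlog : Real.log ((N:ℝ)+1) ≤ 2*s - 2 := by
    have h1 : Real.log ((N:ℝ)+1) = 2 * Real.log s := by
      rw [hs, Real.log_sqrt (by positivity)]; ring
    have h2 : Real.log s ≤ s - 1 := Real.log_le_sub_one_of_pos (by linarith)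
    linarith
  have hCc : Cc ≤ D - ε - 1 := by
    rw [hD]
    have := le_abs_self Cc
    linarith
  have hεs : ε * K ≤ ε * s := by nlinarith
  have key : D + ε + 2*s ≤ ε * s^2 := by
    nlinarith [mul_le_mul_of_nonneg_right hεs (le_trans zero_le_one hs1),
      mul_nonneg (le_of_lt hD0) (by linarith : (0:ℝ) ≤ s - 1),
      mul_nonneg (le_of_lt hε) (by linarith : (0:ℝ) ≤ s - 1)]
  have hεN : ε * (N:ℝ) = ε * s^2 - ε := by rw [hs2]; ring
  linarith

theorem uniform_upper_bound_transfer (lam : ℝ) (hlam : lam ≠ 0)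
    (α : ℝ) (hα : α ∈ Set.Ioc (0 : ℝ) 1) (c₁ : ℝ) (hc₁ : 0 < c₁) :
    ∃ c > (0 : ℝ), ∀ L : ℝ → ℝ, LargeDeviation lam L →
      (∀ E ∈ Set.Icc (-2 : ℝ) 2, ∀ E' ∈ Set.Icc (-2 : ℝ) 2, |L E - L E'| ≤ c₁ * |E - E'| ^ α) →
      ∀ κ ∈ Set.Ioo (0 : ℝ) 1, ∃ κ' > (0 : ℝ), ∃ N₀ : ℕ, ∀ N : ℕ, N₀ ≤ N →
        ∀ E₀ : ℝ, Set.Icc (E₀ - κ) (E₀ + κ) ⊆ Set.Icc (-2 : ℝ) 2 →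
        prVal N {V | L E₀ * N + c * κ ^ α * N ≤
            sSup ((fun E => Real.log (opNorm (MN lam E V))) '' {E | |E - E₀| < κ})}
          ≤ Real.exp (-κ' * N) := by
  obtain ⟨hα0, hα1⟩ := hα
  refine ⟨3*c₁ + 1, by positivity, ?_⟩
  intro L hLDE hHolder κ hκ
  obtain ⟨hκ0, hκ1⟩ := hκ
  have hκα : 0 < κ ^ α := Real.rpow_pos_of_pos hκ0 α
  set σ : ℝ := c₁ * κ ^ α with hσdef
  have hσ0 : 0 < σ := by positivity
  obtain ⟨σ', hσ'pos, C₂, hC₂pos, hLD⟩ := hLDE σ hσ0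
  obtain ⟨N₁, hN₁⟩ := ubt_exists_N0 (κ ^ α) (Real.log 8 + 1) hκα
  obtain ⟨N₂, hN₂⟩ := ubt_exists_N0 (σ'/2) (Real.log C₂) (by linarith)
  refine ⟨σ'/2, by linarith, max (max N₁ N₂) 1, ?_⟩
  intro N hN E₀ hsub
  have hNN₁ : N₁ ≤ N := le_trans (le_trans (le_max_left _ _) (le_max_left _ _)) hN
  have hNN₂ : N₂ ≤ N := le_trans (le_trans (le_max_right _ _) (le_max_left _ _)) hN
  have hN1 : 1 ≤ N := le_trans (le_max_right _ _) hN
  have hNR : (0:ℝ) < N := by exact_mod_cast hN1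
  set Ej : ℕ → ℝ :=
    fun j => E₀ + κ * Real.cos ((2 * (j:ℝ) + 1) * Real.pi / (2 * ((N:ℝ)+1))) with hEj
  have hEjmem : ∀ j : ℕ, Ej j ∈ Set.Icc (-2:ℝ) 2 := by
    intro j
    apply hsub
    rw [Set.mem_Icc, hEj]
    simp only
    constructor
    · have := Real.neg_one_le_cos ((2 * (j:ℝ) + 1) * Real.pi / (2 * ((N:ℝ)+1)))
      nlinarith
    · have := Real.cos_le_one ((2 * (j:ℝ) + 1) * Real.pi / (2 * ((N:ℝ)+1)))
      nlinarith
  have hE₀mem : E₀ ∈ Set.Icc (-2:ℝ) 2 :=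
    hsub (by rw [Set.mem_Icc]; constructor <;> linarith)
  have hHol : ∀ j : ℕ, L (Ej j) ≤ L E₀ + σ := by
    intro j
    have h := hHolder (Ej j) (hEjmem j) E₀ hE₀mem
    have habs : |Ej j - E₀| ≤ κ := by
      rw [hEj]
      simp only
      rw [add_sub_cancel_left, abs_mul, abs_of_pos hκ0]
      exact mul_le_of_le_one_right hκ0.le (Real.abs_cos_le_one _)
    have hpow : |Ej j - E₀| ^ α ≤ κ ^ α :=
      Real.rpow_le_rpow (abs_nonneg _) habs hα0.le
    have h2 : c₁ * |Ej j - E₀| ^ α ≤ σ := by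
      rw [hσdef]; exact mul_le_mul_of_nonneg_left hpow hc₁.le
    have h3 := le_trans (le_abs_self _) h
    linarith
  have hincl : {V : Fin N → Bool | L E₀ * N + (3*c₁+1) * κ ^ α * N ≤
      sSup ((fun E => Real.log (opNorm (MN lam E V))) '' {E | |E - E₀| < κ})}
      ⊆ ⋃ j ∈ Finset.range (N+1),
        {V : Fin N → Bool | σ < |Real.log (opNorm (MN lam (Ej j) V)) / N - L (Ej j)|} := by
    intro V hV
    simp only [Set.mem_setOf_eq] at hV
    have hne : (Finset.range (N+1)).Nonempty := ⟨0, by simp⟩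
    set F : ℕ → ℝ := fun j => opNorm (MN lam (Ej j) V) with hF
    set Xb : ℝ := (Finset.range (N+1)).sup' hne F with hXbdef
    have hXb : ∀ j ∈ Finset.range (N+1), F j ≤ Xb := fun j hj => Finset.le_sup' F hj
    obtain ⟨j₀, hj₀mem, hj₀⟩ := Finset.exists_mem_eq_sup' hne F
    have hXhalf : (1:ℝ)/2 ≤ Xb :=
      le_trans (ubt_half_le_opNorm_MN lam (Ej 0) V) (hXb 0 (by simp))
    have hXpos : 0 < Xb := lt_of_lt_of_le (by norm_num) hXhalf
    have hsup_le : sSup ((fun E => Real.log (opNorm (MN lam E V))) '' {E | |E - E₀| < κ})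
        ≤ Real.log (8*((N:ℝ)+1)*Xb) := by
      apply Real.sSup_le
      · rintro y ⟨E, hEmem, rfl⟩
        simp only [Set.mem_setOf_eq] at hEmem
        have hXb' : ∀ j ∈ Finset.range (N+1),
            opNorm (MN lam (E₀ + κ * Real.cos ((2 * (j:ℝ) + 1) * Real.pi / (2 * ((N:ℝ)+1)))) V)
              ≤ Xb := by
          intro j hj
          have := hXb j hj
          rw [hF] at this
          simp only at this
          rw [hEj] at this
          simpa using this
        have hb := ubt_sup_entry_bound lam E₀ κ hκ0 N V Xb hXb' E hEmem
        have hpos : (0:ℝ) < opNorm (MN lam E V) :=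
          lt_of_lt_of_le (by norm_num) (ubt_half_le_opNorm_MN lam E V)
        exact Real.log_le_log hpos hb
      · apply Real.log_nonneg
        nlinarith
    have hlog8 : Real.log (8*((N:ℝ)+1)) + 1 ≤ κ ^ α * N := by
      have h := hN₁ N hNN₁
      rw [Real.log_mul (by norm_num) (by positivity)]
      linarith
    have hsplit : Real.log (8*((N:ℝ)+1)*Xb) = Real.log (8*((N:ℝ)+1)) + Real.log Xb :=
      Real.log_mul (by positivity) (ne_of_gt hXpos)
    have hXlog : L (Ej j₀) * N + σ * N + 1 ≤ Real.log Xb := by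
      have h1 := le_trans hV hsup_le
      rw [hsplit] at h1
      have h2 : L (Ej j₀) * N ≤ (L E₀ + σ) * N :=
        mul_le_mul_of_nonneg_right (hHol j₀) hNR.le
      have h3 : (3*c₁+1) * κ ^ α * N = 3*(σ*N) + κ ^ α * N := by rw [hσdef]; ring
      have hσN : 0 ≤ σ * N := by positivity
      nlinarith
    rw [hXbdef, hj₀, hF] at hXlog
    simp only at hXlog
    refine Set.mem_biUnion hj₀mem ?_
    simp only [Set.mem_setOf_eq]
    have hxN : (Real.log (opNorm (MN lam (Ej j₀) V)) / N - L (Ej j₀)) * N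
        = Real.log (opNorm (MN lam (Ej j₀) V)) - L (Ej j₀) * N := by
      field_simp
    have hlt : σ * N < (Real.log (opNorm (MN lam (Ej j₀) V)) / N - L (Ej j₀)) * N := by
      rw [hxN]; linarith
    have hσlt : σ < Real.log (opNorm (MN lam (Ej j₀) V)) / N - L (Ej j₀) :=
      lt_of_mul_lt_mul_right hlt hNR.le
    exact lt_of_lt_of_le hσlt (le_abs_self _)
  refine le_trans (ubt_prVal_mono hincl) ?_
  refine le_trans (ubt_prVal_biUnion_le (N+1) _) ?_
  have hterm : ∀ j ∈ Finset.range (N+1),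
      prVal N {V : Fin N → Bool | σ < |Real.log (opNorm (MN lam (Ej j) V)) / N - L (Ej j)|}
      ≤ C₂ * Real.exp (-σ' * N) := fun j _ => hLD (Ej j) (hEjmem j) N hN1
  refine le_trans (Finset.sum_le_sum hterm) ?_
  rw [Finset.sum_const, Finset.card_range, nsmul_eq_mul]
  have hNC : ((N:ℝ)+1) * C₂ ≤ Real.exp (σ'/2 * N) := by
    have h := hN₂ N hNN₂
    have hexp : ((N:ℝ)+1) * C₂ = Real.exp (Real.log C₂ + Real.log ((N:ℝ)+1)) := by
      rw [Real.exp_add, Real.exp_log hC₂pos, Real.exp_log (by positivity)]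
      ring
    rw [hexp]
    exact Real.exp_le_exp.mpr h
  have he : Real.exp (-(σ'/2) * N) = Real.exp (σ'/2 * N) * Real.exp (-σ' * N) := by
    rw [← Real.exp_add]; ring_nf
  calc ((N+1 : ℕ):ℝ) * (C₂ * Real.exp (-σ' * N))
      = (((N:ℝ)+1) * C₂) * Real.exp (-σ' * N) := by push_cast; ring
  _ ≤ Real.exp (σ'/2 * N) * Real.exp (-σ' * N) :=
      mul_le_mul_of_nonneg_right hNC (Real.exp_nonneg _)
  _ = Real.exp (-(σ'/2) * N) := he.symm

end
end

section
/- Let λ, E ∈ ℝ, N ∈ ℤ₊ and V ∈ {−1,1}^N. If E is an eigenvalue of H_N^{(V)}, then ‖M_N(E)·e₁‖ ≤ 1 or ‖M_N(E)^{−1}·e₂‖ ≤ 1, where e₁ = (1,0)ᵀ, e₂ = (0,1)ᵀ and ‖·‖ is the Euclidean norm on ℝ². -/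
open scoped BigOperators

noncomputable section

lemma tmat_mulVec (lam E w p q : ℝ) :
    (Tmat lam E w).mulVec ![p, q] = ![(E - lam * w) * p - q, p] := by
  funext i
  fin_cases i <;>
    simp [Tmat, Matrix.mulVec, dotProduct, Fin.sum_univ_two] <;> ring

lemma tmat_det (lam E w : ℝ) : (Tmat lam E w).det = 1 := by
  simp [Tmat, Matrix.det_fin_two_of]

lemma nrm_pair (a b : ℝ) : nrm ![a, b] = Real.sqrt (a ^ 2 + b ^ 2) := by
  simp [nrm, Fin.sum_univ_two]

theorem eigenvalue_transfer_norm (lam E : ℝ) (N : ℕ) (hN : 1 ≤ N) (V : Fin N → Bool)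
    (hE : ∃ v : Fin N → ℝ, v ≠ 0 ∧ (Ham lam V).mulVec v = E • v) :
    nrm ((MN lam E V).mulVec ![1, 0]) ≤ 1 ∨ nrm ((MN lam E V)⁻¹.mulVec ![0, 1]) ≤ 1 := by
  classical
  obtain ⟨v, hv0, hve⟩ := hE
  set ψ : ℕ → ℝ := fun j => if h : 1 ≤ j ∧ j ≤ N then v ⟨j - 1, by omega⟩ else 0 with hψ
  have hψ0 : ψ 0 = 0 := by simp [hψ]
  have hψtop : ∀ j, N < j → ψ j = 0 := by
    intro j hj
    simp only [hψ]
    rw [dif_neg (by omega)]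
  have hψval : ∀ j (h1 : 1 ≤ j) (h2 : j ≤ N), ψ j = v ⟨j - 1, by omega⟩ := by
    intro j h1 h2
    simp only [hψ]
    rw [dif_pos ⟨h1, h2⟩]
  -- the eigenvector recurrence
  have hrec : ∀ j, 1 ≤ j → j ≤ N → ψ (j + 1) = (E - lam * vOf V j) * ψ j - ψ (j - 1) := by
    intro j h1 h2
    have hi : j - 1 < N := by omega
    set i : Fin N := ⟨j - 1, hi⟩ with hidef
    have hival : i.val = j - 1 := rfl
    have hrow := congrFun hve i
    have hsum : (Ham lam V).mulVec v i =
        (∑ n : Fin N, (if n = i then lam * (if V i then 1 else -1) * v i else 0)) +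
        ((∑ n : Fin N, (if n.val + 1 = i.val then v n else 0)) +
         (∑ n : Fin N, (if i.val + 1 = n.val then v n else 0))) := by
      rw [Matrix.mulVec, ← Finset.sum_add_distrib, ← Finset.sum_add_distrib]
      refine Finset.sum_congr rfl fun n _ => ?_
      by_cases he : i = n
      · subst he
        simp [Ham]
      · have he' : n ≠ i := fun h => he h.symm
        by_cases ha : n.val + 1 = i.val
        · have hb : ¬ i.val + 1 = n.val := by omega
          simp [Ham, he, he', ha, hb]
        · by_cases hb : i.val + 1 = n.val
          · simp [Ham, he, he', ha, hb]
          · simp [Ham, he, he', ha, hb]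
    have hS1 : (∑ n : Fin N, (if n = i then lam * (if V i then 1 else -1) * v i else 0))
        = lam * (if V i then 1 else -1) * v i := by
      rw [Finset.sum_ite_eq']
      simp
    have hS2 : (∑ n : Fin N, (if n.val + 1 = i.val then v n else 0)) = ψ (j - 1) := by
      rcases Nat.lt_or_ge 1 j with hj2 | hj2
      · -- j ≥ 2
        have hm : j - 2 < N := by omega
        rw [Finset.sum_eq_single_of_mem (⟨j - 2, hm⟩ : Fin N) (Finset.mem_univ _)
          (fun n _ hn => if_neg (fun hcon => hn (Fin.ext (by rw [hival] at hcon; simp at hcon ⊢; omega))))]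
        rw [if_pos (by rw [hival]; simp; omega), hψval (j-1) (by omega) (by omega)]
        exact congrArg v (Fin.ext (by simp; omega))
      · -- j = 1
        have hj1 : j = 1 := by omega
        subst hj1
        rw [Finset.sum_eq_zero (fun n _ => if_neg (by rw [hival]; simp))]
        exact hψ0.symm
    have hS3 : (∑ n : Fin N, (if i.val + 1 = n.val then v n else 0)) = ψ (j + 1) := by
      rcases Nat.lt_or_ge j N with hj2 | hj2
      · rw [Finset.sum_eq_single_of_mem (⟨j, hj2⟩ : Fin N) (Finset.mem_univ _)
          (fun n _ hn => if_neg (fun hcon => hn (Fin.ext (by rw [hival] at hcon; simp at hcon ⊢; omega))))]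
        rw [if_pos (by rw [hival]; simp; omega), hψval (j+1) (by omega) (by omega)]
        exact congrArg v (Fin.ext (by simp))
      · rw [Finset.sum_eq_zero (fun n _ => if_neg (by rw [hival]; omega)),
          hψtop (j+1) (by omega)]
    have hvof : vOf V j = (if V i then 1 else -1) := by
      simp only [vOf]
      rw [dif_pos ⟨h1, h2⟩]
    have hvi : v i = ψ j := (hψval j h1 h2).symm
    rw [hsum, hS1, hS2, hS3] at hrow
    have hrhs : (E • v) i = E * ψ j := by rw [Pi.smul_apply, hvi]; simp
    rw [hrhs, hvi] at hrow
    rw [hvof]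
    set s : ℝ := (if V i then 1 else -1)
    ring_nf at hrow ⊢
    linarith [hrow]
  -- forward propagation
  have hfwd : ∀ b, b ≤ N → (Mab lam E V 1 b).mulVec ![ψ 1, ψ 0] = ![ψ (b+1), ψ b] := by
    intro b
    induction b with
    | zero =>
        intro _
        simp [Mab, Matrix.one_mulVec]
    | succ b ih =>
        intro hb
        have hMab : Mab lam E V 1 (b+1) = Tmat lam E (vOf V (b+1)) * Mab lam E V 1 b := by
          show ((List.range' 1 (b+1)).reverse.map _).prod
              = _ * ((List.range' 1 (b + 1 - 1)).reverse.map _).prod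
          rw [List.range'_concat]
          simp [List.reverse_append, Nat.add_comm]
        have h := hrec (b+1) (by omega) hb
        simp only [Nat.add_sub_cancel] at h
        rw [hMab, ← Matrix.mulVec_mulVec, ih (by omega), tmat_mulVec, ← h]
  have hM1 : (MN lam E V).mulVec ![ψ 1, 0] = ![0, ψ N] := by
    have h := hfwd N le_rfl
    rw [hψ0] at h
    rw [MN, h, hψtop (N+1) (by omega)]
  -- determinant
  have hdet : (MN lam E V).det = 1 := by
    rw [MN, Mab]
    generalize (List.range' 1 (N + 1 - 1)).reverse = L
    induction L with
    | nil => simp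
    | cons a t ih => simp [Matrix.det_mul, tmat_det, ih]
  have hdetU : IsUnit (MN lam E V).det := by rw [hdet]; exact isUnit_one
  have hinv : (MN lam E V)⁻¹.mulVec ![0, ψ N] = ![ψ 1, 0] := by
    rw [← hM1, Matrix.mulVec_mulVec, Matrix.nonsing_inv_mul _ hdetU, Matrix.one_mulVec]
  -- nonvanishing
  have hvz : (∀ j, ψ j = 0) → False := by
    intro hall
    apply hv0
    funext i
    have h := hall (i.val + 1)
    rw [hψval (i.val + 1) (by omega) (by omega)] at h
    rwa [(by exact Fin.ext (by simp) : (⟨i.val + 1 - 1, by omega⟩ : Fin N) = i)] at h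
  have hψ1 : ψ 1 ≠ 0 := by
    intro h1
    apply hvz
    have key : ∀ j, ψ j = 0 ∧ ψ (j + 1) = 0 := by
      intro j
      induction j with
      | zero => exact ⟨hψ0, h1⟩
      | succ j ih =>
          refine ⟨ih.2, ?_⟩
          rcases Nat.lt_or_ge N (j + 2) with hj | hj
          · exact hψtop _ hj
          · have h := hrec (j+1) (by omega) (by omega)
            simp only [Nat.add_sub_cancel] at h
            rw [h, ih.1, ih.2]
            ring
    exact fun j => (key j).1
  have hψN : ψ N ≠ 0 := by
    intro hn
    apply hvz
    have key : ∀ k, ψ (N - k) = 0 ∧ ψ (N - k + 1) = 0 := by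
      intro k
      induction k with
      | zero => exact ⟨by simpa using hn, hψtop (N - 0 + 1) (by omega)⟩
      | succ k ih =>
          rcases Nat.lt_or_ge k N with hk | hk
          · have hj1 : 1 ≤ N - k := by omega
            have h := hrec (N - k) hj1 (by omega)
            have e1 : N - k - 1 = N - (k + 1) := by omega
            have e2 : N - (k+1) + 1 = N - k := by omega
            rw [ih.1, ih.2, e1] at h
            constructor
            · have : ψ (N - (k+1)) = 0 := by linarith [h]
              exact this
            · rw [e2]; exact ih.1
          · have e0 : N - (k + 1) = 0 := by omega
            have e1 : N - k = 0 := by omega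
            rw [e0]
            refine ⟨hψ0, ?_⟩
            have := ih.2
            rwa [e1] at this
    intro j
    rcases Nat.lt_or_ge N j with hj | hj
    · exact hψtop j hj
    · have := (key (N - j)).1
      rwa [(by omega : N - (N - j) = j)] at this
  -- compute the two norms
  have habs1 : (ψ 1)⁻¹ * ψ 1 = 1 := inv_mul_cancel₀ hψ1
  have habsN : (ψ N)⁻¹ * ψ N = 1 := inv_mul_cancel₀ hψN
  have hv1 : (![1, 0] : Fin 2 → ℝ) = (ψ 1)⁻¹ • ![ψ 1, 0] := by
    funext i
    fin_cases i <;> simp [habs1]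
  have hv2 : (![0, 1] : Fin 2 → ℝ) = (ψ N)⁻¹ • ![0, ψ N] := by
    funext i
    fin_cases i <;> simp [habsN]
  have hn1 : nrm ((MN lam E V).mulVec ![1, 0]) = |ψ N| / |ψ 1| := by
    rw [hv1, Matrix.mulVec_smul, hM1]
    have : (ψ 1)⁻¹ • (![0, ψ N] : Fin 2 → ℝ) = ![0, (ψ 1)⁻¹ * ψ N] := by
      funext i; fin_cases i <;> simp
    rw [this, nrm_pair]
    rw [(by ring : (0:ℝ)^2 + ((ψ 1)⁻¹ * ψ N)^2 = ((ψ 1)⁻¹ * ψ N)^2), Real.sqrt_sq_eq_abs,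
      abs_mul, abs_inv]
    rw [div_eq_inv_mul]
  have hn2 : nrm ((MN lam E V)⁻¹.mulVec ![0, 1]) = |ψ 1| / |ψ N| := by
    rw [hv2, Matrix.mulVec_smul, hinv]
    have : (ψ N)⁻¹ • (![ψ 1, 0] : Fin 2 → ℝ) = ![(ψ N)⁻¹ * ψ 1, 0] := by
      funext i; fin_cases i <;> simp
    rw [this, nrm_pair]
    rw [(by ring : ((ψ N)⁻¹ * ψ 1)^2 + (0:ℝ)^2 = ((ψ N)⁻¹ * ψ 1)^2), Real.sqrt_sq_eq_abs,
      abs_mul, abs_inv]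
    rw [div_eq_inv_mul]
  rw [hn1, hn2]
  rcases le_total (|ψ N|) (|ψ 1|) with h | h
  · left
    exact div_le_one_of_le₀ h (abs_nonneg _)
  · right
    exact div_le_one_of_le₀ h (abs_nonneg _)


end
end

section
/- Let λ ∈ ℝ, N ∈ ℤ₊, V ∈ {−1,1}^N, and P = [[1,0],[0,0]]. For all E, E₁ ∈ ℝ one has the exact expansion M_N(E) = ∑_{k=0}^{N} (E−E₁)^k · ∑_{1 ≤ ℓ_k < ℓ_{k−1} < ⋯ < ℓ_1 ≤ N} M_{[ℓ₁+1, N]}(E₁) · P · M_{[ℓ₂+1, ℓ₁−1]}(E₁) · P · ⋯ · P · M_{[1, ℓ_k−1]}(E₁), where the k = 0 term is M_N(E₁). -/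
open scoped BigOperators

noncomputable section

lemma Mab_nil (lam E : ℝ) {N : ℕ} (V : Fin N → Bool) {a b : ℕ} (h : b < a) :
    Mab lam E V a b = 1 := by
  have : b + 1 - a = 0 := by omega
  simp [Mab, this]

lemma Mab_succ (lam E : ℝ) {N : ℕ} (V : Fin N → Bool) {a b : ℕ} (h : a ≤ b + 1) :
    Mab lam E V a (b + 1) = Tmat lam E (vOf V (b + 1)) * Mab lam E V a b := by
  have h1 : b + 1 + 1 - a = (b + 1 - a) + 1 := by omega
  have h2 : a + 1 * (b + 1 - a) = b + 1 := by omega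
  rw [Mab, h1, List.range'_concat, List.reverse_append, h2]
  simp [Mab]

lemma Tmat_split (lam E E₁ v : ℝ) :
    Tmat lam E v = Tmat lam E₁ v + (E - E₁) • Pmat := by
  ext i j
  fin_cases i <;> fin_cases j <;>
    simp [Tmat, Pmat, Matrix.add_apply, Matrix.smul_apply] <;> ring

lemma chainProd_step (lam E₁ : ℝ) {N : ℕ} (V : Fin N → Bool) (b : ℕ) (l : List ℕ)
    (hl : ∀ x ∈ l, x ≤ b) :
    chainProd lam E₁ V (b + 1) l = Tmat lam E₁ (vOf V (b + 1)) * chainProd lam E₁ V b l := by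
  cases l with
  | nil => simpa [chainProd] using Mab_succ lam E₁ V (a := 1) (b := b) (by omega)
  | cons ℓ rest =>
      have hℓ : ℓ ≤ b := hl ℓ (by simp)
      simp only [chainProd]
      rw [Mab_succ lam E₁ V (a := ℓ + 1) (b := b) (by omega)]
      simp [Matrix.mul_assoc]

lemma chainProd_top (lam E₁ : ℝ) {N : ℕ} (V : Fin N → Bool) (b : ℕ) (rest : List ℕ) :
    chainProd lam E₁ V (b + 1) ((b + 1) :: rest) = Pmat * chainProd lam E₁ V b rest := by
  simp [chainProd, Mab_nil lam E₁ V (a := b + 2) (b := b + 1) (by omega)]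

lemma sort_reverse_insert_max {a : ℕ} {s : Finset ℕ} (h₁ : ∀ x ∈ s, x ≤ a) (h₂ : a ∉ s) :
    ((insert a s).sort (· ≤ ·)).reverse = a :: (s.sort (· ≤ ·)).reverse := by
  have hperm : ((insert a s).sort (· ≤ ·)).Perm (s.sort (· ≤ ·) ++ [a]) :=
    ((Finset.sort_perm_toList _ _).trans (Finset.toList_insert h₂)).trans
      ((List.perm_append_singleton a _).symm.trans
        (List.Perm.append (Finset.sort_perm_toList _ _).symm (List.Perm.refl [a])))
  have hsorted : List.Pairwise (· ≤ ·) (s.sort (· ≤ ·) ++ [a]) := by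
    refine List.pairwise_append.mpr
      ⟨Finset.pairwise_sort s (· ≤ ·), List.pairwise_singleton _ _, ?_⟩
    intro x hx y hy
    simp only [List.mem_singleton] at hy
    subst hy
    exact h₁ x (Finset.mem_sort _ |>.mp hx)
  have key : (insert a s).sort (· ≤ ·) = s.sort (· ≤ ·) ++ [a] :=
    List.Perm.eq_of_pairwise' (Finset.pairwise_sort _ _) hsorted hperm
  rw [key, List.reverse_append]
  simp

theorem transfer_matrix_expansion (lam : ℝ) (N : ℕ) (hN : 1 ≤ N) (V : Fin N → Bool) (E E₁ : ℝ) :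
    MN lam E V = ∑ k ∈ Finset.range (N + 1), (E - E₁) ^ k •
      ∑ s ∈ Finset.powersetCard k (Finset.Icc 1 N),
        chainProd lam E₁ V N ((s.sort (· ≤ ·)).reverse) := by
  classical
  suffices key : ∀ b : ℕ, Mab lam E V 1 b = ∑ k ∈ Finset.range (b + 1), (E - E₁) ^ k •
      ∑ s ∈ Finset.powersetCard k (Finset.Icc 1 b),
        chainProd lam E₁ V b ((s.sort (· ≤ ·)).reverse) from key N
  intro b
  induction b with
  | zero =>
      simp [Mab_nil lam E V (a := 1) (b := 0) (by omega), chainProd, Mab]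
  | succ b ih =>
      set T : Matrix (Fin 2) (Fin 2) ℝ := Tmat lam E₁ (vOf V (b + 1)) with hT
      set Sg : ℕ → Matrix (Fin 2) (Fin 2) ℝ := fun k =>
        ∑ s ∈ Finset.powersetCard k (Finset.Icc 1 b),
          chainProd lam E₁ V b ((s.sort (· ≤ ·)).reverse) with hSg
      have hnotmem : (b + 1) ∉ Finset.Icc 1 b := by simp
      have hicc : Finset.Icc 1 (b + 1) = insert (b + 1) (Finset.Icc 1 b) := by
        ext x; simp [Finset.mem_Icc]; omega
      -- the inner sum at level k+1
      have hpc : ∀ k : ℕ,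
          (∑ s ∈ Finset.powersetCard (k + 1) (Finset.Icc 1 (b + 1)),
            chainProd lam E₁ V (b + 1) ((s.sort (· ≤ ·)).reverse))
          = T * Sg (k + 1) + Pmat * Sg k := by
        intro k
        rw [hicc, Finset.powersetCard_succ_insert hnotmem]
        have hdisj : Disjoint (Finset.powersetCard (k + 1) (Finset.Icc 1 b))
            ((Finset.powersetCard k (Finset.Icc 1 b)).image (insert (b + 1))) := by
          rw [Finset.disjoint_left]
          intro s hs hs'
          obtain ⟨t, ht, rfl⟩ := Finset.mem_image.mp hs'
          have := (Finset.mem_powersetCard.mp hs).1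
          exact hnotmem (this (Finset.mem_insert_self _ _))
        rw [Finset.sum_union hdisj]
        have h1 : (∑ s ∈ Finset.powersetCard (k + 1) (Finset.Icc 1 b),
            chainProd lam E₁ V (b + 1) ((s.sort (· ≤ ·)).reverse)) = T * Sg (k + 1) := by
          rw [hSg, Finset.mul_sum]
          refine Finset.sum_congr rfl fun s hs => ?_
          refine chainProd_step lam E₁ V b _ fun x hx => ?_
          rw [List.mem_reverse, Finset.mem_sort] at hx
          have := (Finset.mem_powersetCard.mp hs).1 hx
          exact (Finset.mem_Icc.mp this).2
        have h2 : (∑ s ∈ (Finset.powersetCard k (Finset.Icc 1 b)).image (insert (b + 1)),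
            chainProd lam E₁ V (b + 1) ((s.sort (· ≤ ·)).reverse)) = Pmat * Sg k := by
          rw [Finset.sum_image]
          · rw [hSg, Finset.mul_sum]
            refine Finset.sum_congr rfl fun t ht => ?_
            have htsub := (Finset.mem_powersetCard.mp ht).1
            have hnm : (b + 1) ∉ t := fun hmem => hnotmem (htsub hmem)
            rw [sort_reverse_insert_max (fun x hx => by
                  have := htsub hx; exact Nat.le_succ_of_le (Finset.mem_Icc.mp this).2) hnm]
            exact chainProd_top lam E₁ V b _
          · intro s hs t ht hst
            have hns : (b + 1) ∉ s := fun h => hnotmem ((Finset.mem_powersetCard.mp hs).1 h)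
            have hnt : (b + 1) ∉ t := fun h => hnotmem ((Finset.mem_powersetCard.mp ht).1 h)
            have : (insert (b + 1) s).erase (b + 1) = (insert (b + 1) t).erase (b + 1) := by
              rw [hst]
            rwa [Finset.erase_insert hns, Finset.erase_insert hnt] at this
        rw [h1, h2]
      -- k = 0 inner sum
      have hpc0 : (∑ s ∈ Finset.powersetCard 0 (Finset.Icc 1 (b + 1)),
            chainProd lam E₁ V (b + 1) ((s.sort (· ≤ ·)).reverse)) = T * Sg 0 := by
        simp only [Finset.powersetCard_zero, Finset.sum_singleton, Finset.sort_empty,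
          List.reverse_nil, hSg]
        exact chainProd_step lam E₁ V b [] (by simp)
      have hSgtop : Sg (b + 1) = 0 := by
        rw [hSg]
        simp only []
        rw [Finset.powersetCard_eq_empty.mpr (by simp [Nat.card_Icc])]
        simp
      -- expand both sides
      rw [Mab_succ lam E V (a := 1) (by omega), Tmat_split lam E E₁, ih]
      rw [Finset.sum_range_succ' (fun k => (E - E₁) ^ k •
        ∑ s ∈ Finset.powersetCard k (Finset.Icc 1 (b + 1)),
          chainProd lam E₁ V (b + 1) ((s.sort (· ≤ ·)).reverse)) (b + 1)]
      simp only [hpc, hpc0, pow_zero, one_smul]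
      rw [add_mul, smul_mul_assoc, Finset.mul_sum]
      have lhs1 : (∑ k ∈ Finset.range (b + 1), T * ((E - E₁) ^ k • Sg k))
          = ∑ k ∈ Finset.range (b + 1), (E - E₁) ^ k • (T * Sg k) := by
        refine Finset.sum_congr rfl fun k _ => (mul_smul_comm _ _ _)
      rw [lhs1]
      rw [Finset.sum_range_succ' (fun k => (E - E₁) ^ k • (T * Sg k)) b]
      have lhs2 : (E - E₁) • (Pmat * ∑ k ∈ Finset.range (b + 1), (E - E₁) ^ k • Sg k)
          = ∑ k ∈ Finset.range (b + 1), (E - E₁) ^ (k + 1) • (Pmat * Sg k) := by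
        rw [Finset.mul_sum, Finset.smul_sum]
        refine Finset.sum_congr rfl fun k _ => ?_
        rw [mul_smul_comm, smul_smul, pow_succ']
      rw [lhs2]
      have rhs1 : (∑ k ∈ Finset.range (b + 1),
            (E - E₁) ^ (k + 1) • (T * Sg (k + 1) + Pmat * Sg k))
          = (∑ k ∈ Finset.range (b + 1), (E - E₁) ^ (k + 1) • (T * Sg (k + 1)))
            + ∑ k ∈ Finset.range (b + 1), (E - E₁) ^ (k + 1) • (Pmat * Sg k) := by
        rw [← Finset.sum_add_distrib]
        refine Finset.sum_congr rfl fun k _ => smul_add _ _ _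
      rw [rhs1]
      rw [Finset.sum_range_succ (fun k => (E - E₁) ^ (k + 1) • (T * Sg (k + 1))) b]
      rw [hSgtop]
      simp only [mul_zero, smul_zero, add_zero]
      rw [add_right_comm]
      simp

end
end

section
/- Let λ, E₀ ∈ ℝ, N ∈ ℤ₊, V ∈ {−1,1}^N and 1 < j < N. If η ∈ ℝ^N satisfies η_j = 0, then ‖(H_{[1,j−1]} − E₀)·η|_{[1,j−1]}‖₂² + ‖(H_{[j+1,N]} − E₀)·η|_{[j+1,N]}‖₂² ≤ ‖(H_N − E₀)·η‖₂², where η|_{[a,b]} ∈ ℝ^{b−a+1} denotes the restriction of η to coordinates a, …, b. -/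
open scoped BigOperators

noncomputable section

lemma nrm_sq {n : ℕ} (x : Fin n → ℝ) : nrm x ^ 2 = ∑ i, x i ^ 2 := by
  rw [nrm, Real.sq_sqrt]
  exact Finset.sum_nonneg fun i _ => sq_nonneg _

lemma blockRow (lam E₀ : ℝ) {N : ℕ} (V : Fin N → Bool) (η : Fin N → ℝ)
    (a b : ℕ) (ha : 1 ≤ a) (hbN : b ≤ N)
    (hlow : ∀ (h2 : 2 ≤ a) (h : a - 2 < N), η ⟨a - 2, h⟩ = 0)
    (hhigh : ∀ (h : b < N), η ⟨b, h⟩ = 0)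
    (i : Fin (b + 1 - a)) (hr : a - 1 + i.val < N) :
    ((HamRes lam V a b - E₀ • 1).mulVec (restr η a b)) i
      = ((Ham lam V - E₀ • 1).mulVec η) ⟨a - 1 + i.val, hr⟩ := by
  have hia : i.val < b + 1 - a := i.isLt
  have hab : a ≤ b := by omega
  rw [Matrix.mulVec, Matrix.mulVec, dotProduct, dotProduct]
  have key : ∑ k : Fin N, (Ham lam V - E₀ • 1) ⟨a - 1 + i.val, hr⟩ k * η k
      = ∑ k ∈ Finset.univ.filter (fun k : Fin N => a - 1 ≤ k.val ∧ k.val < b),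
          (Ham lam V - E₀ • 1) ⟨a - 1 + i.val, hr⟩ k * η k := by
    refine (Finset.sum_subset (Finset.subset_univ _) ?_).symm
    intro k _ hk
    simp only [Finset.mem_filter, Finset.mem_univ, true_and, not_and, not_lt] at hk
    simp only [Matrix.sub_apply, Matrix.smul_apply, Matrix.one_apply, Ham, Matrix.of_apply,
      smul_eq_mul]
    by_cases hd : (⟨a - 1 + i.val, hr⟩ : Fin N) = k
    · exfalso
      have hval : (⟨a - 1 + i.val, hr⟩ : Fin N).val = k.val := by rw [hd]
      simp only [Fin.val_mk] at hval
      omega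
    · rw [if_neg hd, if_neg hd]
      by_cases h1 : a - 1 + i.val + 1 = k.val
      · -- k = r + 1; then k ∉ window means k ≥ b, so k = b (since r ≤ b-1)
        have hkb : k.val = b := by
          rcases Nat.lt_or_ge k.val (a-1) with h | h
          · omega
          · have := hk h; omega
        have hbN' : b < N := by omega
        have : k = ⟨b, hbN'⟩ := Fin.ext hkb
        rw [this, hhigh hbN']
        ring
      · by_cases h2 : k.val + 1 = a - 1 + i.val
        · -- k = r - 1; outside window means k < a-1, so k = a-2, a ≥ 2
          have h2a : 2 ≤ a := by
            rcases Nat.lt_or_ge k.val (a-1) with h | h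
            · omega
            · have := hk h; omega
          have hka : k.val = a - 2 := by
            rcases Nat.lt_or_ge k.val (a-1) with h | h
            · omega
            · have := hk h; omega
          have hN' : a - 2 < N := by omega
          have : k = ⟨a - 2, hN'⟩ := Fin.ext hka
          rw [this, hlow h2a hN']
          ring
        · rw [if_neg (not_or.mpr ⟨h1, h2⟩)]
          ring
  rw [key]
  refine Finset.sum_nbij' (fun k : Fin (b+1-a) => (⟨a - 1 + k.val, by have := k.isLt; omega⟩ : Fin N))
    (fun k : Fin N => (⟨min (k.val - (a-1)) (b - a), by omega⟩ : Fin (b+1-a))) ?_ ?_ ?_ ?_ ?_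
  · intro k _
    simp only [Finset.mem_filter, Finset.mem_univ, true_and]
    have := k.isLt; omega
  · intro k hk
    exact Finset.mem_univ _
  · intro k _
    have := k.isLt
    apply Fin.ext
    simp only [Fin.val_mk]
    omega
  · intro k hk
    simp only [Finset.mem_filter, Finset.mem_univ, true_and] at hk
    apply Fin.ext
    simp only [Fin.val_mk]
    omega
  · intro k _
    have hkv : k.val < b + 1 - a := k.isLt
    have hkN : a - 1 + k.val < N := by omega
    simp only [Matrix.sub_apply, Matrix.smul_apply, Matrix.one_apply, Ham, HamRes,
      Matrix.of_apply, smul_eq_mul, restr]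
    have hresL : a + k.val - 1 < N := by omega
    rw [dif_pos hresL]
    have hfe : ((⟨a - 1 + i.val, hr⟩ : Fin N) = ⟨a - 1 + k.val, hkN⟩) ↔ (i = k) := by
      constructor
      · intro h
        simp only [Fin.mk.injEq] at h
        exact Fin.ext (by omega)
      · intro h; subst h; rfl
    have hηe : (⟨a + k.val - 1, hresL⟩ : Fin N) = ⟨a - 1 + k.val, hkN⟩ := by
      simp only [Fin.mk.injEq]; omega
    rw [hηe]
    by_cases hd : i = k
    · subst hd
      rw [if_pos rfl, if_pos (hfe.mpr rfl), if_pos rfl, if_pos (hfe.mpr rfl)]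
      have hvOf : vOf V (a + i.val) = (if V ⟨a - 1 + i.val, hkN⟩ then (1:ℝ) else -1) := by
        rw [vOf, dif_pos (by omega : 1 ≤ a + i.val ∧ a + i.val ≤ N)]
        have hix : (⟨a + i.val - 1, by omega⟩ : Fin N) = ⟨a - 1 + i.val, hkN⟩ := by
          simp only [Fin.mk.injEq]; omega
        rw [hix]
      rw [hvOf]
    · rw [if_neg hd, if_neg (fun h => hd (hfe.mp h)), if_neg hd,
        if_neg (fun h => hd (hfe.mp h))]
      by_cases hadj : i.val + 1 = k.val ∨ k.val + 1 = i.val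
      · rw [if_pos hadj, if_pos (by omega)]
      · rw [if_neg hadj, if_neg (by omega)]

theorem dirichlet_decoupling (lam E₀ : ℝ) (N : ℕ) (V : Fin N → Bool)
    (j : ℕ) (hj1 : 1 < j) (hjN : j < N) (η : Fin N → ℝ) (hηj : η ⟨j - 1, by omega⟩ = 0) :
    nrm ((HamRes lam V 1 (j - 1) - E₀ • 1).mulVec (restr η 1 (j - 1))) ^ 2 +
      nrm ((HamRes lam V (j + 1) N - E₀ • 1).mulVec (restr η (j + 1) N)) ^ 2
    ≤ nrm ((Ham lam V - E₀ • 1).mulVec η) ^ 2 := by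
  rw [nrm_sq, nrm_sq, nrm_sq]
  set f : Fin N → ℝ := (Ham lam V - E₀ • 1).mulVec η with hf
  have hA : ∀ i : Fin (j - 1 + 1 - 1),
      ((HamRes lam V 1 (j - 1) - E₀ • 1).mulVec (restr η 1 (j - 1))) i
        = f ⟨1 - 1 + i.val, by have := i.isLt; omega⟩ := by
    intro i
    refine blockRow lam E₀ V η 1 (j - 1) le_rfl (by omega) ?_ ?_ _ _
    · intro h2 _; omega
    · intro h
      have : (⟨j - 1, h⟩ : Fin N) = ⟨j - 1, by omega⟩ := rfl
      rw [this]; exact hηj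
  have hB : ∀ i : Fin (N + 1 - (j + 1)),
      ((HamRes lam V (j + 1) N - E₀ • 1).mulVec (restr η (j + 1) N)) i
        = f ⟨j + 1 - 1 + i.val, by have := i.isLt; omega⟩ := by
    intro i
    refine blockRow lam E₀ V η (j + 1) N (by omega) le_rfl ?_ ?_ _ _
    · intro _ h
      have : (⟨j + 1 - 2, h⟩ : Fin N) = ⟨j - 1, by omega⟩ := by
        simp only [Fin.mk.injEq]; omega
      rw [this]; exact hηj
    · intro h; exact absurd h (lt_irrefl N)
  simp only [hA, hB]
  set e1 : Fin (j - 1 + 1 - 1) → Fin N :=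
    fun i => ⟨1 - 1 + i.val, by have := i.isLt; omega⟩ with he1
  set e2 : Fin (N + 1 - (j + 1)) → Fin N :=
    fun i => ⟨j + 1 - 1 + i.val, by have := i.isLt; omega⟩ with he2
  have hinj1 : ∀ x ∈ (Finset.univ : Finset (Fin (j - 1 + 1 - 1))), ∀ y ∈ Finset.univ,
      e1 x = e1 y → x = y := by
    intro x _ y _ h
    simp only [he1, Fin.mk.injEq] at h
    exact Fin.ext (by omega)
  have hinj2 : ∀ x ∈ (Finset.univ : Finset (Fin (N + 1 - (j + 1)))), ∀ y ∈ Finset.univ,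
      e2 x = e2 y → x = y := by
    intro x _ y _ h
    simp only [he2, Fin.mk.injEq] at h
    exact Fin.ext (by omega)
  show ∑ x : Fin (j - 1 + 1 - 1), f (e1 x) ^ 2 + ∑ x : Fin (N + 1 - (j + 1)), f (e2 x) ^ 2
      ≤ ∑ i : Fin N, f i ^ 2
  rw [← Finset.sum_image (f := fun k => f k ^ 2) hinj1,
    ← Finset.sum_image (f := fun k => f k ^ 2) hinj2]
  have hdisj : Disjoint (Finset.univ.image e1) (Finset.univ.image e2) := by
    rw [Finset.disjoint_left]
    intro k hk1 hk2
    simp only [Finset.mem_image, Finset.mem_univ, true_and] at hk1 hk2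
    obtain ⟨x, hx⟩ := hk1
    obtain ⟨y, hy⟩ := hk2
    have hxv : (1 : ℕ) - 1 + x.val = k.val := by rw [← hx]
    have hyv : j + 1 - 1 + y.val = k.val := by rw [← hy]
    have := x.isLt
    have := y.isLt
    omega
  rw [← Finset.sum_union hdisj]
  exact Finset.sum_le_sum_of_subset_of_nonneg (Finset.subset_univ _)
    (fun i _ _ => sq_nonneg _)

end
end
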